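/- Let η : ℤ → ℝ≥0 be finitely supported, l < εN integers with l, N ≥ 1, and η^l(x) the block average over a box of radius l. Then |η^{εN}(x) − η^l(x)| ≤ (2εN+1)^{-1} Σ_{2l+1 < |y| ≤ εN} |η^l(x) − η^l(x+y)| + C·(l/(εN)) · (2l+1)^{-1} Σ_{|z−x| ≤ εN + l} η(z) for some universal constant C > 0. -/
import Mathlib

theorem stmt_15 :
    ∃ C : ℝ, 0 < C ∧
      ∀ (η : ℤ → ℝ), (∀ z, 0 ≤ η z) → (Function.support η).Finite →
      ∀ (l n : ℕ), 1 ≤ l → 2 * l + 1 < n →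
      ∀ (ηavg : ℕ → ℤ → ℝ),
        (∀ (m : ℕ) (x : ℤ),
          ηavg m x = (1 / (2 * (m : ℝ) + 1)) * ∑ y ∈ Finset.Icc (x - m) (x + m), η y) →
      ∀ x : ℤ,
        |ηavg n x - ηavg l x| ≤
          (1 / (2 * (n : ℝ) + 1)) *
            ∑ y ∈ (Finset.Icc (-(n : ℤ)) n).filter (fun y => 2 * (l : ℤ) + 1 < |y|),
              |ηavg l x - ηavg l (x + y)| +
          C * ((l : ℝ) / n) * ((1 / (2 * (l : ℝ) + 1)) *
            ∑ z ∈ Finset.Icc (x - (n + l : ℕ)) (x + (n + l : ℕ)), η z) := by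
  refine ⟨100, by norm_num, ?_⟩
  intro η hη _hfin l n hl hn ηavg havg x
  have hlz : (1:ℤ) ≤ (l:ℤ) := by exact_mod_cast hl
  have hnz : 2*(l:ℤ)+1 < (n:ℤ) := by exact_mod_cast hn
  have hLr : (1:ℝ) ≤ (l:ℝ) := by exact_mod_cast hl
  have hNr : 2*(l:ℝ)+1 < (n:ℝ) := by exact_mod_cast hn
  have hNr0 : (0:ℝ) < (n:ℝ) := by linarith
  have hL0 : (0:ℝ) < 2*(l:ℝ)+1 := by linarith
  have hN0 : (0:ℝ) < 2*(n:ℝ)+1 := by linarith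
  -- the big sum
  have hSsum0 : (0:ℝ) ≤ ∑ z ∈ Finset.Icc (x - (n + l : ℕ)) (x + (n + l : ℕ)), η z :=
    Finset.sum_nonneg fun z _ => hη z
  set Ssum : ℝ := ∑ z ∈ Finset.Icc (x - (n + l : ℕ)) (x + (n + l : ℕ)), η z with hSsumdef
  set S : ℝ := (1 / (2 * (l : ℝ) + 1)) * Ssum with hSdef
  have hS0 : 0 ≤ S := mul_nonneg (by positivity) hSsum0
  have hSS : (2*(l:ℝ)+1) * S = Ssum := by
    rw [hSdef, ← mul_assoc, mul_one_div_cancel (ne_of_gt hL0), one_mul]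
  -- reindexing lemma
  have reindex : ∀ (c : ℤ) (m : ℕ), ∑ w ∈ Finset.Icc (c - (m:ℤ)) (c + m), η w
      = ∑ u ∈ Finset.Icc (-(m:ℤ)) m, η (c + u) := by
    intro c m
    rw [show c - (m:ℤ) = c + -(m:ℤ) by ring, ← Finset.map_add_left_Icc (-(m:ℤ)) (m:ℤ) c,
      Finset.sum_map]
    simp
  -- block averages over windows inside the big box are at most S
  have avg_y_le : ∀ y : ℤ, -(n:ℤ) ≤ y → y ≤ (n:ℤ) → ηavg l (x + y) ≤ S := by
    intro y h1 h2
    rw [havg, hSdef]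
    refine mul_le_mul_of_nonneg_left ?_ (by positivity)
    refine Finset.sum_le_sum_of_subset_of_nonneg ?_ (fun z _ _ => hη z)
    apply Finset.Icc_subset_Icc <;> push_cast <;> omega
  have avg_x_le : ηavg l x ≤ S := by
    have h := avg_y_le 0 (by omega) (by omega)
    simpa using h
  have avg_nonneg : ∀ (m : ℕ) (x' : ℤ), 0 ≤ ηavg m x' := by
    intro m x'
    rw [havg]
    exact mul_nonneg (by positivity) (Finset.sum_nonneg fun z _ => hη z)
  -- the n-average is small
  have hn_avg : ηavg n x ≤ 2*((l:ℝ)/n)*S := by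
    rw [havg]
    have hsub : ∑ y ∈ Finset.Icc (x - (n:ℤ)) (x + n), η y ≤ Ssum := by
      refine Finset.sum_le_sum_of_subset_of_nonneg ?_ (fun z _ _ => hη z)
      apply Finset.Icc_subset_Icc <;> push_cast <;> omega
    have h1 : (1/(2*(n:ℝ)+1)) * ∑ y ∈ Finset.Icc (x - (n:ℤ)) (x + n), η y
        ≤ (1/(2*(n:ℝ)+1)) * Ssum :=
      mul_le_mul_of_nonneg_left hsub (by positivity)
    refine h1.trans ?_
    have hfrac : 1/(2*(n:ℝ)+1) ≤ 2*((l:ℝ)/n)*(1/(2*(l:ℝ)+1)) := by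
      rw [show 2*((l:ℝ)/n)*(1/(2*(l:ℝ)+1)) = (2*(l:ℝ))/((n:ℝ)*(2*(l:ℝ)+1)) by
        field_simp]
      rw [div_le_div_iff₀ hN0 (by positivity)]
      nlinarith [mul_nonneg (by linarith : (0:ℝ) ≤ (l:ℝ) - 1) (le_of_lt hNr0)]
    calc (1/(2*(n:ℝ)+1)) * Ssum ≤ (2*((l:ℝ)/n)*(1/(2*(l:ℝ)+1))) * Ssum :=
          mul_le_mul_of_nonneg_right hfrac hSsum0
      _ = 2*((l:ℝ)/n)*S := by rw [hSdef]; ring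
  -- Fubini: total mass of shifted block averages
  have L4 : ∑ y ∈ Finset.Icc (-(n:ℤ)) n, ηavg l (x + y) ≤ Ssum := by
    have hcardl : (Finset.Icc (-(l:ℤ)) (l:ℤ)).card = 2*l+1 := by
      rw [Int.card_Icc]; omega
    calc ∑ y ∈ Finset.Icc (-(n:ℤ)) n, ηavg l (x + y)
        = (1/(2*(l:ℝ)+1)) * ∑ y ∈ Finset.Icc (-(n:ℤ)) n,
            ∑ u ∈ Finset.Icc (-(l:ℤ)) l, η (x + y + u) := by
          rw [Finset.mul_sum]
          refine Finset.sum_congr rfl fun y _ => ?_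
          rw [havg, reindex (x+y) l]
      _ = (1/(2*(l:ℝ)+1)) * ∑ u ∈ Finset.Icc (-(l:ℤ)) l,
            ∑ y ∈ Finset.Icc (-(n:ℤ)) n, η (x + y + u) := by rw [Finset.sum_comm]
      _ ≤ (1/(2*(l:ℝ)+1)) * ∑ _u ∈ Finset.Icc (-(l:ℤ)) l, Ssum := by
          refine mul_le_mul_of_nonneg_left ?_ (by positivity)
          refine Finset.sum_le_sum fun u hu => ?_
          have hu' := Finset.mem_Icc.mp hu
          have e : ∑ y ∈ Finset.Icc (-(n:ℤ)) n, η (x + y + u)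
              = ∑ w ∈ Finset.Icc ((x+u) - (n:ℤ)) ((x+u) + n), η w := by
            rw [reindex (x+u) n]
            refine Finset.sum_congr rfl fun y _ => ?_
            congr 1; ring
          rw [e]
          refine Finset.sum_le_sum_of_subset_of_nonneg ?_ (fun z _ _ => hη z)
          apply Finset.Icc_subset_Icc <;> push_cast <;> omega
      _ = (1/(2*(l:ℝ)+1)) * ((2*(l:ℝ)+1) * Ssum) := by
          rw [Finset.sum_const, hcardl, nsmul_eq_mul]
          push_cast; ring
      _ = Ssum := by
          rw [← mul_assoc, one_div_mul_cancel (ne_of_gt hL0), one_mul]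
  -- cardinalities
  have hcardn : (Finset.Icc (-(n:ℤ)) (n:ℤ)).card = 2*n+1 := by
    rw [Int.card_Icc]; omega
  have hfilt : (Finset.Icc (-(n:ℤ)) (n:ℤ)).filter (fun y => ¬ (2*(l:ℤ)+1 < |y|))
      = Finset.Icc (-(2*(l:ℤ)+1)) (2*(l:ℤ)+1) := by
    ext y
    simp only [Finset.mem_filter, Finset.mem_Icc, not_lt, abs_le]
    omega
  have hcardc : ((Finset.Icc (-(n:ℤ)) (n:ℤ)).filter
      (fun y => ¬ (2*(l:ℤ)+1 < |y|))).card = 4*l+3 := by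
    rw [hfilt, Int.card_Icc]; omega
  -- main splitting
  set F := (Finset.Icc (-(n : ℤ)) n).filter (fun y => 2 * (l : ℤ) + 1 < |y|) with hFdef
  set A : ℝ := ∑ y ∈ F, |ηavg l x - ηavg l (x + y)| with hAdef
  have hA0 : 0 ≤ A := Finset.sum_nonneg fun y _ => abs_nonneg _
  have key : (2*(n:ℝ)+1) * ηavg l x ≤ A + Ssum + (4*(l:ℝ)+3) * S := by
    have hsplit := Finset.sum_filter_add_sum_filter_not (Finset.Icc (-(n:ℤ)) (n:ℤ))
      (fun y => 2*(l:ℤ)+1 < |y|) (fun _ => ηavg l x)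
    have hconst : ∑ _y ∈ Finset.Icc (-(n:ℤ)) (n:ℤ), ηavg l x = (2*(n:ℝ)+1) * ηavg l x := by
      rw [Finset.sum_const, hcardn, nsmul_eq_mul]; push_cast; ring
    have h1 : ∑ _y ∈ F, ηavg l x ≤ A + Ssum := by
      have hpt : ∀ y ∈ F, ηavg l x ≤ |ηavg l x - ηavg l (x+y)| + ηavg l (x+y) := by
        intro y _
        have := le_abs_self (ηavg l x - ηavg l (x+y))
        linarith
      calc ∑ _y ∈ F, ηavg l x
          ≤ ∑ y ∈ F, (|ηavg l x - ηavg l (x+y)| + ηavg l (x+y)) :=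
            Finset.sum_le_sum hpt
        _ = A + ∑ y ∈ F, ηavg l (x+y) := by rw [Finset.sum_add_distrib, hAdef]
        _ ≤ A + Ssum := by
            have hsub : ∑ y ∈ F, ηavg l (x+y) ≤ ∑ y ∈ Finset.Icc (-(n:ℤ)) n, ηavg l (x+y) :=
              Finset.sum_le_sum_of_subset_of_nonneg (Finset.filter_subset _ _)
                (fun y _ _ => avg_nonneg l (x+y))
            linarith [L4]
    have h2 : ∑ _y ∈ (Finset.Icc (-(n:ℤ)) (n:ℤ)).filter (fun y => ¬ (2*(l:ℤ)+1 < |y|)),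
        ηavg l x ≤ (4*(l:ℝ)+3) * S := by
      rw [Finset.sum_const, hcardc, nsmul_eq_mul]
      have : ((4*l+3 : ℕ) : ℝ) = 4*(l:ℝ)+3 := by push_cast; ring
      rw [this]
      exact mul_le_mul_of_nonneg_left avg_x_le (by positivity)
    calc (2*(n:ℝ)+1) * ηavg l x = ∑ _y ∈ Finset.Icc (-(n:ℤ)) (n:ℤ), ηavg l x := hconst.symm
      _ = ∑ _y ∈ F, ηavg l x + ∑ _y ∈ (Finset.Icc (-(n:ℤ)) (n:ℤ)).filter
            (fun y => ¬ (2*(l:ℤ)+1 < |y|)), ηavg l x := hsplit.symm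
      _ ≤ (A + Ssum) + (4*(l:ℝ)+3) * S := add_le_add h1 h2
      _ = A + Ssum + (4*(l:ℝ)+3) * S := by ring
  -- divide by 2n+1
  have hl_bound : ηavg l x ≤ (1/(2*(n:ℝ)+1)) * A + ((6*(l:ℝ)+4)/(2*(n:ℝ)+1)) * S := by
    have h : ηavg l x ≤ (A + (6*(l:ℝ)+4)*S)/(2*(n:ℝ)+1) := by
      rw [le_div_iff₀ hN0]
      nlinarith [key, hSS]
    refine h.trans (le_of_eq ?_)
    field_simp
  have hdiv : (6*(l:ℝ)+4)/(2*(n:ℝ)+1) ≤ 98*((l:ℝ)/n) := by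
    rw [show 98*((l:ℝ)/n) = (98*(l:ℝ))/(n:ℝ) by ring, div_le_div_iff₀ hN0 hNr0]
    nlinarith [mul_nonneg (by linarith : (0:ℝ) ≤ (l:ℝ) - 1) (le_of_lt hNr0)]
  have hdivS : ((6*(l:ℝ)+4)/(2*(n:ℝ)+1)) * S ≤ 98*((l:ℝ)/n)*S :=
    mul_le_mul_of_nonneg_right hdiv hS0
  have hT0 : (0:ℝ) ≤ (1/(2*(n:ℝ)+1)) * A := mul_nonneg (by positivity) hA0
  have hLNS : (0:ℝ) ≤ ((l:ℝ)/n) * S := mul_nonneg (by positivity) hS0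
  have hnx0 : 0 ≤ ηavg n x := avg_nonneg n x
  have hlx0 : 0 ≤ ηavg l x := avg_nonneg l x
  refine abs_le.mpr ⟨by linarith, by linarith⟩
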